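/- arXiv:1511.06813 — 3 statements merged into one kernel-verified Lean document; each statement's English description precedes it below -/
import Mathlib

section
/- If a CADMG G' is reachable from a CADMG G and G' has random vertex set C, then G' = G[C]; that is, G' has fixed vertex set pa_G(C) \ C, its bidirected edges are exactly the bidirected edges of G with both endpoints in C, and its directed edges are exactly the directed edges of G pointing to a vertex of C. -/
open Classical

noncomputable section

/-- A conditional acyclic directed mixed graph (CADMG): disjoint sets of random
vertices `V` and fixed vertices `W`, directed edges into `V` with no loops or
directed cycles, symmetric bidirected edges between distinct random vertices,
and every fixed vertex has at least one child. -/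
structure CADMG (α : Type) where
  V : Set α
  W : Set α
  dir : Set (α × α)
  bi : Set (α × α)
  disjointVW : Disjoint V W
  dir_mem : ∀ e ∈ dir, e.1 ∈ V ∪ W ∧ e.2 ∈ V
  dir_irrefl : ∀ e ∈ dir, e.1 ≠ e.2
  acyclic : ∀ a b : α, Relation.ReflTransGen (fun x y => (x, y) ∈ dir) a b →
      Relation.ReflTransGen (fun x y => (x, y) ∈ dir) b a → a = b
  bi_symm : ∀ a b : α, (a, b) ∈ bi → (b, a) ∈ bi
  bi_mem : ∀ e ∈ bi, e.1 ∈ V ∧ e.2 ∈ V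
  bi_irrefl : ∀ e ∈ bi, e.1 ≠ e.2
  fixed_child : ∀ w ∈ W, ∃ v, (w, v) ∈ dir

namespace CADMG

variable {α : Type}

/-- The parents of a vertex. -/
def pa (G : CADMG α) (b : α) : Set α := {a | (a, b) ∈ G.dir}

/-- The parents of a set of vertices. -/
def paSet (G : CADMG α) (A : Set α) : Set α := {a | ∃ b ∈ A, (a, b) ∈ G.dir}

/-- The ancestors of a set of vertices (every vertex is its own ancestor). -/
def anc (G : CADMG α) (A : Set α) : Set α :=
  {w | ∃ v ∈ A, Relation.ReflTransGen (fun x y => (x, y) ∈ G.dir) w v}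

/-- An ancestral set contains all of its own ancestors. -/
def Ancestral (G : CADMG α) (A : Set α) : Prop := G.anc A = A

/-- A random-ancestral set: a set of random vertices all of whose ancestors are
in the set itself or fixed. -/
def RandomAncestral (G : CADMG α) (A : Set α) : Prop :=
  A ⊆ G.V ∧ G.anc A ⊆ A ∪ G.W

/-- The sterile subset of `C`: those members of `C` that are not parents of `C`. -/
def sterile (G : CADMG α) (C : Set α) : Set α := C \ G.paSet C

/-- A bidirected-connected set of random vertices: every two members are joined by
a path of bidirected edges with all intermediate vertices inside the set. -/
def BiConn (G : CADMG α) (B : Set α) : Prop :=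
  B ⊆ G.V ∧ ∀ a ∈ B, ∀ b ∈ B,
    Relation.ReflTransGen (fun x y => (x, y) ∈ G.bi ∧ x ∈ B ∧ y ∈ B) a b

/-- A district: a maximal bidirected-connected set of random vertices. -/
def IsDistrict (G : CADMG α) (D : Set α) : Prop :=
  D.Nonempty ∧ G.BiConn D ∧ ∀ D', G.BiConn D' → D ⊆ D' → D' = D

/-- `dis G B`: the union of the districts of `G` meeting `B`. -/
def dis (G : CADMG α) (B : Set α) : Set α :=
  ⋃₀ {D | G.IsDistrict D ∧ (D ∩ B).Nonempty}

/-- The induced graph `G[C]`: random vertices `C`, fixed vertices `pa_G(C) \ C`,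
the bidirected edges of `G` within `C` and the directed edges of `G` pointing
into `C`. -/
def induce (G : CADMG α) (C : Set α) : CADMG α where
  V := C ∩ G.V
  W := G.paSet (C ∩ G.V) \ (C ∩ G.V)
  dir := {e | e ∈ G.dir ∧ e.2 ∈ C ∩ G.V}
  bi := {e | e ∈ G.bi ∧ e.1 ∈ C ∩ G.V ∧ e.2 ∈ C ∩ G.V}
  disjointVW := by
    rw [Set.disjoint_left]; rintro a ha ⟨-, h⟩; exact h ha
  dir_mem := by
    rintro e ⟨he, h2⟩
    refine ⟨?_, h2⟩
    by_cases h1 : e.1 ∈ C ∩ G.V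
    · exact Or.inl h1
    · exact Or.inr ⟨⟨e.2, h2, he⟩, h1⟩
  dir_irrefl := fun e he => G.dir_irrefl e he.1
  acyclic := fun a b h1 h2 =>
    G.acyclic a b (h1.lift id fun x y h => h.1) (h2.lift id fun x y h => h.1)
  bi_symm := fun a b h => ⟨G.bi_symm a b h.1, h.2.2, h.2.1⟩
  bi_mem := fun e he => ⟨he.2.1, he.2.2⟩
  bi_irrefl := fun e he => G.bi_irrefl e he.1
  fixed_child := by
    rintro w ⟨⟨b, hb, hwb⟩, -⟩
    exact ⟨b, hwb, hb⟩

/-- A CADMG `G'` is reachable from `G` if it is obtained by iteratively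
restricting to a district (`𝔡`) or to a random-ancestral set (`𝔪`). -/
inductive Reach : CADMG α → CADMG α → Prop where
  | refl (G : CADMG α) : Reach G G
  | district {G₁ G₂ : CADMG α} {D : Set α} :
      Reach G₁ G₂ → G₂.IsDistrict D → Reach G₁ (G₂.induce D)
  | margin {G₁ G₂ : CADMG α} {A : Set α} :
      Reach G₁ G₂ → G₂.RandomAncestral A → Reach G₁ (G₂.induce A)

/-- `G₁` is a subgraph of `G₂`. -/
def Subgraph (G₁ G₂ : CADMG α) : Prop :=
  G₁.V ⊆ G₂.V ∧ G₁.W ⊆ G₂.W ∧ G₁.dir ⊆ G₂.dir ∧ G₁.bi ⊆ G₂.bi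

/-- An intrinsic set: a nonempty bidirected-connected set `S` of random vertices
such that `G[S]` is reachable from `G`. -/
def Intrinsic (G : CADMG α) (S : Set α) : Prop :=
  S.Nonempty ∧ G.BiConn S ∧ Reach G (G.induce S)

/-- The recursive heads of `G`: sterile subsets of intrinsic sets. -/
def heads (G : CADMG α) : Set (Set α) :=
  {H | ∃ S, G.Intrinsic S ∧ G.sterile S = H}

/-- The (unique) intrinsic set whose recursive head is `H`. -/
def intrinsicOf (G : CADMG α) (H : Set α) : Set α :=
  ⋃₀ {S | G.Intrinsic S ∧ G.sterile S = H}

/-- The partial order on recursive heads: `H₁ ≺ H₂` iff the intrinsic set of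
`H₁` is strictly contained in that of `H₂`. -/
def headLT (G : CADMG α) (H₁ H₂ : Set α) : Prop :=
  G.intrinsicOf H₁ ⊂ G.intrinsicOf H₂

/-- The tail of a recursive head: the parents of its intrinsic set. -/
def tail (G : CADMG α) (H : Set α) : Set α := G.paSet (G.intrinsicOf H)

/-- One step of the intrinsic-closure iteration: restrict to the ancestors of
`B`, then to the districts meeting `B`. -/
def closureStep (B : Set α) (G : CADMG α) : CADMG α :=
  (G.induce (G.anc B)).induce ((G.induce (G.anc B)).dis B)

/-- The intrinsic closure `I_G(B)`: the random vertex set of the stable graph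
obtained by repeatedly alternating restriction to the ancestors of `B` and to
the districts meeting `B`.  (After `Fintype.card α` rounds the iteration has
stabilised.) -/
def intrinsicClosure [Fintype α] (G : CADMG α) (B : Set α) : Set α :=
  ((closureStep B)^[Fintype.card α] G).V

/-- `Φ_G(C)`: the `≺`-maximal recursive heads of `G` contained in `C`. -/
def Phi (G : CADMG α) (C : Set α) : Set (Set α) :=
  {H | H ∈ G.heads ∧ H ⊆ C ∧ ∀ H' ∈ G.heads, H' ⊆ C → H' ≠ H → ¬ G.headLT H H'}

/-- `ψ_G(C) = C \ ⋃ Φ_G(C)`. -/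
def psi (G : CADMG α) (C : Set α) : Set α := C \ ⋃₀ G.Phi C

/-- The recursive-head partition `⟨C⟩_G`, defined by `⟨∅⟩ = ∅` and
`⟨C⟩ = Φ(C) ∪ ⟨ψ(C)⟩`.  (The guard on cardinalities is automatically satisfied
whenever the recursion is used, since `ψ_G(C) ⊊ C` for nonempty `C`.) -/
def partn (G : CADMG α) (C : Set α) : Set (Set α) :=
  if C = ∅ then ∅
  else if h : (G.psi C).ncard < C.ncard then G.Phi C ∪ G.partn (G.psi C)
  else G.Phi C
termination_by C.ncard
decreasing_by exact h

/-- A kernel `p_{V|W}`, written as a function of a full assignment of binary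
values to all vertices: it takes values in `[0,1]`, depends only on the
coordinates in `V ∪ W`, and for every assignment to `W` (and the remaining
coordinates) the values summed over assignments to `V` equal `1`. -/
def IsKernel [Fintype α] (V W : Set α) (p : (α → Bool) → ℝ) : Prop :=
  (∀ x, 0 ≤ p x ∧ p x ≤ 1) ∧
  (∀ x y : α → Bool, (∀ v ∈ V ∪ W, x v = y v) → p x = p y) ∧
  (∀ x : α → Bool, ∑ g : α → Bool,
      (if ∀ v, v ∉ V → g v = x v then p g else 0) = 1)

/-- Sum a function of assignments over all values of the coordinates in `D`
(the marginal summing out the variables in `D`). -/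
def marginOut [Fintype α] (D : Set α) (p : (α → Bool) → ℝ) (x : α → Bool) : ℝ :=
  ∑ g : α → Bool, if ∀ v, v ∉ D → g v = x v then p g else 0

/-- `q` is a version of the conditional kernel of `A` given `B` and `W`, derived
from the kernel `p = p_{V|W}`. -/
def IsCondVersion [Fintype α] (V W A B : Set α)
    (p q : (α → Bool) → ℝ) : Prop :=
  IsKernel A (B ∪ W) q ∧
  ∀ x : α → Bool, q x * marginOut (V \ B) p x = marginOut (V \ (A ∪ B)) p x

/-- Recursive factorization of a kernel `p` according to a CADMG `G`
(the nested Markov property): either `|V| = 1`, or (i) `p` factorizes into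
kernels indexed by the districts of `G`, each of which (when there are at least
two districts) recursively factorizes according to the induced graph, and
(ii) for every ancestral set `A` with `V \ A ≠ ∅` the margin over `A` does not
depend on the fixed coordinates outside `A` and recursively factorizes
according to `G[V ∩ A]`. -/
inductive RF [Fintype α] : CADMG α → ((α → Bool) → ℝ) → Prop where
  | base (G : CADMG α) (p : (α → Bool) → ℝ) (h : G.V.ncard = 1) : RF G p
  | factor (G : CADMG α) (p : (α → Bool) → ℝ)
      (Ds : Finset (Set α)) (r : Set α → (α → Bool) → ℝ)
      (hDs : ∀ D, G.IsDistrict D ↔ D ∈ Ds)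
      (hker : ∀ D ∈ Ds, IsKernel D (G.paSet D \ D) (r D))
      (hfact : ∀ x, p x = ∏ D ∈ Ds, r D x)
      (hrec : 2 ≤ Ds.card → ∀ D ∈ Ds, RF (G.induce D) (r D))
      (hmarg_nodep : ∀ A : Set α, G.Ancestral A → (G.V \ A).Nonempty →
        ∀ x y : α → Bool, (∀ v ∈ (G.V ∩ A) ∪ (G.W ∩ A), x v = y v) →
          marginOut (G.V \ A) p x = marginOut (G.V \ A) p y)
      (hmarg_rf : ∀ A : Set α, G.Ancestral A → (G.V \ A).Nonempty →
        RF (G.induce (G.V ∩ A)) (marginOut (G.V \ A) p)) :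
      RF G p

/-- The alternating sum `Σ_{O ⊆ C ⊆ U} (−1)^{|C\O|} ∏_{H ∈ ⟨C⟩_G} q_H(x_T)`. -/
def altSum (G : CADMG α) (q : Set α → (α → Bool) → ℝ) (x : α → Bool)
    (O U : Set α) : ℝ :=
  ∑ᶠ C ∈ {C : Set α | O ⊆ C ∧ C ⊆ U},
    (-1 : ℝ) ^ (C \ O).ncard * ∏ᶠ H ∈ G.partn C, q H x

/-- A kernel `p` is parameterized according to `G`: there are parameters
`q_H(x_T)` (one real number for each recursive head `H` and each value `x_T` of
its tail `T`) with
`p(x_V | x_W) = Σ_{O ⊆ C ⊆ V} (−1)^{|C\O|} ∏_{H ∈ ⟨C⟩_G} q_H(x_T)`,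
where `O = {v ∈ V : x_v = 0}`. -/
def Parameterized [Fintype α] (G : CADMG α) (p : (α → Bool) → ℝ) : Prop :=
  ∃ q : Set α → (α → Bool) → ℝ,
    (∀ H ∈ G.heads, ∀ x y : α → Bool,
        (∀ v ∈ G.tail H, x v = y v) → q H x = q H y) ∧
    ∀ x : α → Bool,
      p x = G.altSum q x {v | v ∈ G.V ∧ x v = false} G.V

end CADMG

/-- The invariant maintained by reachability. -/
def ReachInv {α : Type} (G G' : CADMG α) : Prop :=
  G'.V ⊆ G.V ∧
  G'.W = G.paSet G'.V \ G'.V ∧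
  G'.dir = {e | e ∈ G.dir ∧ e.2 ∈ G'.V} ∧
  G'.bi = {e | e ∈ G.bi ∧ e.1 ∈ G'.V ∧ e.2 ∈ G'.V}

theorem reachInv_induce {α : Type} {G G₂ : CADMG α} (h : ReachInv G G₂) {S : Set α}
    (hS : S ⊆ G₂.V) : ReachInv G (G₂.induce S) := by
  obtain ⟨hsub, hW, hdir, hbi⟩ := h
  have hSV : S ∩ G₂.V = S := Set.inter_eq_left.mpr hS
  have hV : (G₂.induce S).V = S := hSV
  have hpa : G₂.paSet S = G.paSet S := by
    ext a
    constructor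
    · rintro ⟨b, hbS, hab⟩
      rw [hdir] at hab
      exact ⟨b, hbS, hab.1⟩
    · rintro ⟨b, hbS, hab⟩
      exact ⟨b, hbS, by rw [hdir]; exact ⟨hab, hS hbS⟩⟩
  refine ⟨by rw [hV]; exact hS.trans hsub, ?_, ?_, ?_⟩
  · show G₂.paSet (S ∩ G₂.V) \ (S ∩ G₂.V) = _
    rw [hV, hSV, hpa]
  · show {e | e ∈ G₂.dir ∧ e.2 ∈ S ∩ G₂.V} = _
    ext e
    rw [hV]
    simp only [Set.mem_setOf_eq, hdir, hSV]
    constructor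
    · rintro ⟨⟨h1, _⟩, h2⟩; exact ⟨h1, h2⟩
    · rintro ⟨h1, h2⟩; exact ⟨⟨h1, hS h2⟩, h2⟩
  · show {e | e ∈ G₂.bi ∧ e.1 ∈ S ∩ G₂.V ∧ e.2 ∈ S ∩ G₂.V} = _
    ext e
    rw [hV]
    simp only [Set.mem_setOf_eq, hbi, hSV]
    constructor
    · rintro ⟨⟨h1, _⟩, h2, h3⟩; exact ⟨h1, h2, h3⟩
    · rintro ⟨h1, h2, h3⟩; exact ⟨⟨h1, hS h2, hS h3⟩, h2, h3⟩

theorem reachInv_of_reach {α : Type} {G G' : CADMG α} (h : CADMG.Reach G G') :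
    ReachInv G G' := by
  induction h with
  | refl =>
      refine ⟨subset_rfl, ?_, ?_, ?_⟩
      · ext a
        constructor
        · intro ha
          obtain ⟨v, hv⟩ := G.fixed_child a ha
          exact ⟨⟨v, (G.dir_mem _ hv).2, hv⟩,
            fun hav => G.disjointVW.le_bot ⟨hav, ha⟩⟩
        · rintro ⟨⟨b, hb, hab⟩, haV⟩
          rcases (G.dir_mem _ hab).1 with h | h
          · exact absurd h haV
          · exact h
      · ext e
        exact ⟨fun he => ⟨he, (G.dir_mem e he).2⟩, fun he => he.1⟩
      · ext e
        exact ⟨fun he => ⟨he, (G.bi_mem e he).1, (G.bi_mem e he).2⟩,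
          fun he => he.1⟩
  | district _ hD ih => exact reachInv_induce ih hD.2.1.1
  | margin _ hA ih => exact reachInv_induce ih hA.1

/-- **Lemma 1 (well-definedness of reachable graphs).**  If a CADMG `G'` is
reachable from `G` and has random vertex set `C`, then `G' = G[C]`: its fixed
vertices are `pa_G(C) \ C`, its directed edges are exactly the directed edges
of `G` pointing to a vertex of `C`, and its bidirected edges are exactly the
bidirected edges of `G` with both endpoints in `C`. -/
theorem reachable_graph_eq_induced {α : Type} (G G' : CADMG α) (C : Set α)
    (hreach : CADMG.Reach G G') (hC : G'.V = C) :
    G'.W = G.paSet C \ C ∧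
    G'.dir = {e | e ∈ G.dir ∧ e.2 ∈ C} ∧
    G'.bi = {e | e ∈ G.bi ∧ e.1 ∈ C ∧ e.2 ∈ C} := by
  obtain ⟨_, hW, hdir, hbi⟩ := reachInv_of_reach hreach
  subst hC
  exact ⟨hW, hdir, hbi⟩
end
end

section
/- Let G be a CADMG and B ⊆ V a bidirected-connected set whose intrinsic closure I_G(B) is bidirected-connected (hence an intrinsic set). Then the recursive head H = sterile_G(I_G(B)) of the intrinsic set I_G(B) satisfies H ⊆ B. -/
open Classical

noncomputable section

namespace CADMG

variable {α : Type}

lemma ext' {G₁ G₂ : CADMG α} (hV : G₁.V = G₂.V) (hW : G₁.W = G₂.W)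
    (hd : G₁.dir = G₂.dir) (hb : G₁.bi = G₂.bi) : G₁ = G₂ := by
  cases G₁; cases G₂; simp_all

lemma paSet_V_diff (G : CADMG α) : G.paSet G.V \ G.V = G.W := by
  ext a
  constructor
  · rintro ⟨⟨b, hb, hab⟩, ha⟩
    rcases (G.dir_mem _ hab).1 with h | h
    · exact absurd h ha
    · exact h
  · intro ha
    obtain ⟨v, hv⟩ := G.fixed_child a ha
    exact ⟨⟨v, (G.dir_mem _ hv).2, hv⟩, fun hav => G.disjointVW.le_bot ⟨hav, ha⟩⟩

lemma induce_eq_self (G : CADMG α) {C : Set α} (h : G.V ⊆ C) : G.induce C = G := by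
  have hCV : C ∩ G.V = G.V := Set.inter_eq_right.mpr h
  apply ext'
  · exact hCV
  · show G.paSet (C ∩ G.V) \ (C ∩ G.V) = G.W
    rw [hCV, paSet_V_diff]
  · show {e | e ∈ G.dir ∧ e.2 ∈ C ∩ G.V} = G.dir
    ext e; exact ⟨fun he => he.1, fun he => ⟨he, h (G.dir_mem e he).2, (G.dir_mem e he).2⟩⟩
  · show {e | e ∈ G.bi ∧ e.1 ∈ C ∩ G.V ∧ e.2 ∈ C ∩ G.V} = G.bi
    ext e
    exact ⟨fun he => he.1, fun he => ⟨he, ⟨h (G.bi_mem e he).1, (G.bi_mem e he).1⟩, ⟨h (G.bi_mem e he).2, (G.bi_mem e he).2⟩⟩⟩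

lemma stepV_subset (B : Set α) (G : CADMG α) : (closureStep B G).V ⊆ G.V :=
  fun _ hv => hv.2.2

lemma stepV_subset_anc (B : Set α) (G : CADMG α) : (closureStep B G).V ⊆ G.anc B :=
  fun _ hv => hv.2.1

lemma step_dir_subset (B : Set α) (G : CADMG α) : (closureStep B G).dir ⊆ G.dir :=
  fun _ he => he.1.1

lemma fix_of_V_eq (B : Set α) (G : CADMG α) (h : (closureStep B G).V = G.V) :
    closureStep B G = G := by
  have hVsub : G.V ⊆ G.anc B := fun v hv => stepV_subset_anc B G (h ▸ hv)
  have hH : G.induce (G.anc B) = G := induce_eq_self G hVsub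
  have hstep : closureStep B G = G.induce (G.dis B) := by
    unfold closureStep; rw [hH]
  have h' : G.dis B ∩ G.V = G.V := by rw [hstep] at h; exact h
  rw [hstep]
  exact induce_eq_self G (Set.inter_eq_right.mp h')

end CADMG

/-- **Proposition 3 (the head of the intrinsic closure lies in the set).**
If `B` is a bidirected-connected set of random vertices whose intrinsic
closure `I_G(B)` is bidirected-connected (hence an intrinsic set), then the
recursive head `H = sterile_G(I_G(B))` of `I_G(B)` satisfies `H ⊆ B`. -/
theorem sterile_intrinsicClosure_subset {α : Type} [Fintype α]
    (G : CADMG α) (B : Set α) (hB : G.BiConn B)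
    (hI : G.BiConn (G.intrinsicClosure B)) :
    G.sterile (G.intrinsicClosure B) ⊆ B := by
  classical
  set n := Fintype.card α with hn
  set f : ℕ → CADMG α := fun k => (CADMG.closureStep B)^[k] G with hf
  have hIdef : G.intrinsicClosure B = (f n).V := rfl
  -- directed edges of all iterates are edges of G
  have hdir : ∀ k, (f k).dir ⊆ G.dir := by
    intro k
    induction k with
    | zero => exact fun e he => he
    | succ k ih =>
      have hk1 : f (k + 1) = CADMG.closureStep B (f k) := by
        simp only [hf, Function.iterate_succ_apply']
      rw [hk1]
      exact fun e he => ih (CADMG.step_dir_subset B (f k) he)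
  -- dichotomy: the iteration reaches a fixed point, or the vertex set is empty
  have key : CADMG.closureStep B (f n) = f n ∨ (f n).V = ∅ := by
    by_cases hP : ∃ k ≤ n, CADMG.closureStep B (f k) = f k
    · left
      obtain ⟨k, hk, hfix⟩ := hP
      have hfn : f n = f k := by
        have h1 : f n = (CADMG.closureStep B)^[n - k] (f k) := by
          simp only [hf, ← Function.iterate_add_apply]
          congr 1
          omega
        rw [h1, Function.iterate_fixed hfix]
      rw [hfn]
      exact hfix
    · right
      push_neg at hP
      have hcard : ∀ k, k ≤ n → (f k).V.ncard ≤ n - k := by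
        intro k
        induction k with
        | zero =>
          intro _
          have h1 : (f 0).V.ncard ≤ (Set.univ : Set α).ncard :=
            Set.ncard_le_ncard (Set.subset_univ _) Set.finite_univ
          simpa [Set.ncard_univ, Nat.card_eq_fintype_card, hn] using h1
        | succ k ih =>
          intro hk
          have h1 := ih (by omega)
          have hk1 : f (k + 1) = CADMG.closureStep B (f k) := by
            simp only [hf, Function.iterate_succ_apply']
          have hsub : (f (k + 1)).V ⊆ (f k).V := by
            rw [hk1]; exact CADMG.stepV_subset B (f k)
          have hne : (f (k + 1)).V ≠ (f k).V := by
            intro h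
            exact hP k (by omega) (CADMG.fix_of_V_eq B (f k) (hk1 ▸ h))
          have hlt : (f (k + 1)).V.ncard < (f k).V.ncard :=
            Set.ncard_lt_ncard (hsub.ssubset_of_ne hne) (Set.toFinite _)
          omega
      have h0 := hcard n le_rfl
      simp only [Nat.sub_self, Nat.le_zero] at h0
      exact (Set.ncard_eq_zero (Set.toFinite _)).mp h0
  -- main argument
  intro v hv
  rcases key with hfix | hempty
  · -- fixed point case
    by_contra hvB
    obtain ⟨hvI, hvnp⟩ := hv
    have hvI' : v ∈ (f n).V := hvI
    have hanc : v ∈ (f n).anc B := by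
      have : v ∈ (CADMG.closureStep B (f n)).V := by rw [hfix]; exact hvI'
      exact CADMG.stepV_subset_anc B (f n) this
    obtain ⟨b, hbB, hpath⟩ := hanc
    rcases hpath.cases_head with heq | ⟨u, hvu, _⟩
    · exact hvB (heq ▸ hbB)
    · have huI : u ∈ (f n).V := ((f n).dir_mem _ hvu).2
      exact hvnp ⟨u, huI, hdir n hvu⟩
  · -- empty case
    exact absurd hv.1 (by rw [hIdef, hempty]; exact Set.notMem_empty v)
end
end

section
/- Let G be a CADMG with binary state spaces whose random vertex set is the disjoint union V = D₁ ∪̇ ⋯ ∪̇ D_l of sets such that for i ≠ j there is no bidirected edge of G from a vertex in D_i to a vertex in D_j. Then for any assignment of real numbers q_H(x_T) (for H ∈ H(G) with tail T = T(H) and x_T ∈ 𝔛_T), any x_{V∪W} ∈ 𝔛_{V∪W}, O = {v ∈ V : x_v = 0}, and O_i = O ∩ D_i: Σ_{C : O ⊆ C ⊆ V} (−1)^{|C\O|} ∏_{H∈⟨C⟩_G} q_H(x_T) = ∏_{i=1}^l Σ_{C : O_i ⊆ C ⊆ D_i} (−1)^{|C\O_i|} ∏_{H∈⟨C⟩_G}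 q_H(x_T). -/
open Classical

noncomputable section

section AuxLemmas

variable {α : Type} [Fintype α] {G : CADMG α} {l : ℕ} {D : Fin l → Set α}

private lemma dirRel_chain (G : CADMG α) {S : Set α} (f : α → α)
    (hf : ∀ s ∈ S, f s ∈ S ∧ (s, f s) ∈ G.dir) :
    ∀ n, ∀ s ∈ S, f^[n] s ∈ S ∧
      Relation.ReflTransGen (fun x y => (x, y) ∈ G.dir) s (f^[n] s) := by
  intro n
  induction n with
  | zero => intro s hs; exact ⟨hs, Relation.ReflTransGen.refl⟩
  | succ n ih =>
      intro s hs
      obtain ⟨h1, h2⟩ := ih s hs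
      rw [Function.iterate_succ_apply']
      exact ⟨(hf _ h1).1, h2.tail (hf _ h1).2⟩

lemma CADMG.sterile_nonempty (G : CADMG α) {S : Set α} (hS : S.Nonempty) :
    (G.sterile S).Nonempty := by
  by_contra hc
  rw [Set.not_nonempty_iff_eq_empty] at hc
  have hstep : ∀ s ∈ S, ∃ t, t ∈ S ∧ (s, t) ∈ G.dir := by
    intro s hs
    by_contra h
    push_neg at h
    have hmem : s ∈ G.sterile S := by
      refine ⟨hs, ?_⟩
      rintro ⟨b, hb, hsb⟩
      exact h b hb hsb
    rw [hc] at hmem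
    exact hmem
  set f : α → α := fun s => if hs : s ∈ S then (hstep s hs).choose else s with hfdef
  have hf : ∀ s ∈ S, f s ∈ S ∧ (s, f s) ∈ G.dir := by
    intro s hs
    simp only [hfdef, dif_pos hs]
    exact ⟨(hstep s hs).choose_spec.1, (hstep s hs).choose_spec.2⟩
  obtain ⟨s₀, hs₀⟩ := hS
  obtain ⟨i, j, hne, hij⟩ := Finite.exists_ne_map_eq_of_infinite (fun n : ℕ => f^[n] s₀)
  wlog hlt : i < j generalizing i j
  · exact this j i hne.symm hij.symm (hne.lt_or_gt.resolve_left hlt)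
  set a := f^[i] s₀ with ha
  have haS : a ∈ S := (dirRel_chain G f hf i s₀ hs₀).1
  have hcycle : f^[j - i] a = a := by
    calc f^[j - i] (f^[i] s₀) = f^[(j - i) + i] s₀ :=
          (Function.iterate_add_apply f (j - i) i s₀).symm
      _ = f^[j] s₀ := by rw [Nat.sub_add_cancel hlt.le]
      _ = a := hij.symm
  have hk : 0 < j - i := Nat.sub_pos_of_lt hlt
  have hfaS : f a ∈ S := (hf a haS).1
  have h2 : Relation.ReflTransGen (fun x y => (x, y) ∈ G.dir) (f a) a := by
    have hch := (dirRel_chain G f hf (j - i - 1) (f a) hfaS).2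
    have heq : f^[j - i - 1] (f a) = a := by
      have hkk : j - i - 1 + 1 = j - i := by omega
      calc f^[j - i - 1] (f a) = f^[j - i - 1 + 1] a :=
            (Function.iterate_succ_apply f _ a).symm
        _ = a := by rw [hkk]; exact hcycle
    rwa [heq] at hch
  have h1 : Relation.ReflTransGen (fun x y => (x, y) ∈ G.dir) a (f a) :=
    Relation.ReflTransGen.single (hf a haS).2
  have heq : a = f a := G.acyclic a (f a) h1 h2
  exact G.dir_irrefl (a, f a) (hf a haS).2 heq

lemma CADMG.head_nonempty (G : CADMG α) {H : Set α} (hH : H ∈ G.heads) : H.Nonempty := by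
  obtain ⟨S, hS, rfl⟩ := hH
  exact G.sterile_nonempty hS.1

lemma CADMG.head_subset_V {H : Set α} (hH : H ∈ G.heads) : H ⊆ G.V := by
  obtain ⟨S, hS, rfl⟩ := hH
  exact fun v hv => hS.2.1.1 hv.1

lemma CADMG.head_subset_intrinsicOf {H : Set α} (hH : H ∈ G.heads) :
    H ⊆ G.intrinsicOf H := by
  obtain ⟨S, hS, rfl⟩ := hH
  intro v hv
  exact ⟨S, ⟨hS, rfl⟩, hv.1⟩

lemma biconn_subset_piece
    (hV : G.V = ⋃ i, D i)
    (hbi : ∀ e ∈ G.bi, ∀ i j : Fin l, i ≠ j → ¬ (e.1 ∈ D i ∧ e.2 ∈ D j))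
    {B : Set α} (hB : G.BiConn B) {i : Fin l} {v : α}
    (hv : v ∈ B) (hvi : v ∈ D i) : B ⊆ D i := by
  intro a ha
  have hpath := hB.2 v hv a ha
  clear ha
  induction hpath with
  | refl => exact hvi
  | tail hbc hstep ih =>
      obtain ⟨hedge, hbB, hcB⟩ := hstep
      have hcV := hB.1 hcB
      rw [hV] at hcV
      obtain ⟨j, hj⟩ := Set.mem_iUnion.mp hcV
      by_cases hji : j = i
      · subst hji; exact hj
      · exact absurd ⟨ih, hj⟩ (hbi _ hedge i j (Ne.symm hji))

lemma head_piece
    (hV : G.V = ⋃ i, D i)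
    (hbi : ∀ e ∈ G.bi, ∀ i j : Fin l, i ≠ j → ¬ (e.1 ∈ D i ∧ e.2 ∈ D j))
    {H : Set α} (hH : H ∈ G.heads) :
    ∃ i, H ⊆ D i ∧ G.intrinsicOf H ⊆ D i := by
  obtain ⟨v, hv⟩ := G.head_nonempty hH
  have hvV : v ∈ G.V := CADMG.head_subset_V hH hv
  rw [hV] at hvV
  obtain ⟨i, hi⟩ := Set.mem_iUnion.mp hvV
  have hIO : G.intrinsicOf H ⊆ D i := by
    rintro a ⟨S, ⟨hSint, hster⟩, haS⟩
    have hvS : v ∈ S := by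
      rw [← hster] at hv
      exact hv.1
    exact biconn_subset_piece hV hbi hSint.2.1 hvS hi haS
  exact ⟨i, (CADMG.head_subset_intrinsicOf hH).trans hIO, hIO⟩

lemma not_headLT
    (hV : G.V = ⋃ i, D i) (hdisj : Pairwise (Function.onFun Disjoint D))
    (hbi : ∀ e ∈ G.bi, ∀ i j : Fin l, i ≠ j → ¬ (e.1 ∈ D i ∧ e.2 ∈ D j))
    {H H' : Set α} {i j : Fin l} (hH : H ∈ G.heads) (hHi : H ⊆ D i)
    (hH' : H' ∈ G.heads) (hH'j : H' ⊆ D j) (hij : i ≠ j) : ¬ G.headLT H H' := by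
  intro hlt
  obtain ⟨j', hj'1, hj'2⟩ := head_piece hV hbi hH'
  obtain ⟨v', hv'⟩ := G.head_nonempty hH'
  have hjj : j' = j := by
    by_contra hne
    exact Set.disjoint_left.mp (hdisj hne) (hj'1 hv') (hH'j hv')
  subst hjj
  obtain ⟨v, hv⟩ := G.head_nonempty hH
  have hvj : v ∈ D j' := hj'2 (hlt.subset (CADMG.head_subset_intrinsicOf hH hv))
  exact Set.disjoint_left.mp (hdisj hij) (hHi hv) hvj

lemma Phi_inter
    (hV : G.V = ⋃ i, D i) (hdisj : Pairwise (Function.onFun Disjoint D))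
    (hbi : ∀ e ∈ G.bi, ∀ i j : Fin l, i ≠ j → ¬ (e.1 ∈ D i ∧ e.2 ∈ D j))
    (C : Set α) : G.Phi C = ⋃ i, G.Phi (C ∩ D i) := by
  ext H
  simp only [Set.mem_iUnion]
  constructor
  · rintro ⟨hh, hsub, hmax⟩
    obtain ⟨i, hDi, -⟩ := head_piece hV hbi hh
    exact ⟨i, hh, Set.subset_inter hsub hDi,
      fun H' hh' hsub' hne hlt => hmax H' hh' (hsub'.trans Set.inter_subset_left) hne hlt⟩
  · rintro ⟨i, hh, hsub, hmax⟩
    refine ⟨hh, hsub.trans Set.inter_subset_left, ?_⟩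
    intro H' hh' hsubC hne hlt
    obtain ⟨j, hj, -⟩ := head_piece hV hbi hh'
    by_cases hji : j = i
    · subst hji
      exact hmax H' hh' (Set.subset_inter hsubC hj) hne hlt
    · exact not_headLT hV hdisj hbi hh (hsub.trans Set.inter_subset_right) hh' hj
        (fun h => hji h.symm) hlt

lemma psi_inter
    (hV : G.V = ⋃ i, D i) (hdisj : Pairwise (Function.onFun Disjoint D))
    (hbi : ∀ e ∈ G.bi, ∀ i j : Fin l, i ≠ j → ¬ (e.1 ∈ D i ∧ e.2 ∈ D j))
    (C : Set α) (i : Fin l) : G.psi C ∩ D i = G.psi (C ∩ D i) := by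
  ext v
  constructor
  · rintro ⟨⟨hvC, hvn⟩, hvD⟩
    refine ⟨⟨hvC, hvD⟩, fun hmem => hvn ?_⟩
    obtain ⟨H, hHmem, hvH⟩ := hmem
    have : H ∈ G.Phi C := by
      rw [Phi_inter hV hdisj hbi C]
      exact Set.mem_iUnion.mpr ⟨i, hHmem⟩
    exact ⟨H, this, hvH⟩
  · rintro ⟨⟨hvC, hvD⟩, hvn⟩
    refine ⟨⟨hvC, fun hmem => ?_⟩, hvD⟩
    obtain ⟨H, hHmem, hvH⟩ := hmem
    rw [Phi_inter hV hdisj hbi C] at hHmem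
    obtain ⟨j, hHj⟩ := Set.mem_iUnion.mp hHmem
    have hHsub : H ⊆ D j := hHj.2.1.trans Set.inter_subset_right
    have hji : j = i := by
      by_contra hne
      exact Set.disjoint_left.mp (hdisj hne) (hHsub hvH) hvD
    subst hji
    exact hvn ⟨H, hHj, hvH⟩

lemma partn_empty (G : CADMG α) : G.partn ∅ = ∅ := by rw [CADMG.partn]; simp

lemma Phi_empty (G : CADMG α) : G.Phi ∅ = ∅ := by
  ext H
  simp only [CADMG.Phi, Set.mem_setOf_eq, Set.mem_empty_iff_false, iff_false, not_and]
  intro hh hsub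
  obtain ⟨v, hv⟩ := G.head_nonempty hh
  exact absurd (hsub hv) (Set.notMem_empty v)

lemma psi_empty (G : CADMG α) : G.psi ∅ = ∅ := by
  simp [CADMG.psi]

lemma partn_eq (G : CADMG α) (C : Set α) :
    G.partn C = G.Phi C ∪ G.partn (G.psi C) := by
  by_cases hC : C = ∅
  · subst hC
    rw [partn_empty, Phi_empty, psi_empty, partn_empty, Set.union_self]
  · by_cases hg : (G.psi C).ncard < C.ncard
    · rw [CADMG.partn, if_neg hC, dif_pos hg]
    · have hpsi : G.psi C = C :=
        Set.eq_of_subset_of_ncard_le Set.diff_subset (le_of_not_gt hg) (Set.toFinite C)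
      have h2 : G.partn C = G.Phi C := by rw [CADMG.partn, if_neg hC, dif_neg hg]
      rw [hpsi, h2, Set.union_self]

lemma partn_mem (G : CADMG α) :
    ∀ n (C : Set α), C.ncard ≤ n → ∀ H ∈ G.partn C, H ∈ G.heads ∧ H ⊆ C := by
  intro n
  induction n with
  | zero =>
      intro C hC H hH
      have hCe : C = ∅ := by
        rw [← Set.ncard_eq_zero (Set.toFinite C)]; omega
      subst hCe
      rw [partn_empty] at hH
      exact absurd hH (Set.notMem_empty H)
  | succ n ih =>
      intro C hC H hH
      rw [CADMG.partn] at hH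
      split_ifs at hH with h1 h2
      · exact absurd hH (Set.notMem_empty H)
      · rcases hH with hH | hH
        · exact ⟨hH.1, hH.2.1⟩
        · have hle : (G.psi C).ncard ≤ n := by omega
          obtain ⟨ha, hb⟩ := ih _ hle H hH
          exact ⟨ha, hb.trans Set.diff_subset⟩
      · exact ⟨hH.1, hH.2.1⟩

lemma partn_split
    (hV : G.V = ⋃ i, D i) (hdisj : Pairwise (Function.onFun Disjoint D))
    (hbi : ∀ e ∈ G.bi, ∀ i j : Fin l, i ≠ j → ¬ (e.1 ∈ D i ∧ e.2 ∈ D j)) :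
    ∀ n (C : Set α), C.ncard ≤ n → G.partn C = ⋃ i, G.partn (C ∩ D i) := by
  intro n
  induction n with
  | zero =>
      intro C hC
      have hCe : C = ∅ := by
        rw [← Set.ncard_eq_zero (Set.toFinite C)]; omega
      subst hCe
      simp [partn_empty]
  | succ n ih =>
      intro C hC
      by_cases hg : (G.psi C).ncard < C.ncard
      · rw [partn_eq, Phi_inter hV hdisj hbi, ih (G.psi C) (by omega),
          ← Set.iUnion_union_distrib]
        refine Set.iUnion_congr fun i => ?_
        rw [psi_inter hV hdisj hbi, ← partn_eq]
      · by_cases hC0 : C = ∅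
        · subst hC0
          simp [partn_empty]
        · have hpsi : G.psi C = C :=
            Set.eq_of_subset_of_ncard_le Set.diff_subset (le_of_not_gt hg) (Set.toFinite C)
          have e1 : G.partn C = G.Phi C := by rw [CADMG.partn, if_neg hC0, dif_neg hg]
          rw [e1, Phi_inter hV hdisj hbi]
          refine Set.iUnion_congr fun i => ?_
          have hpsii : G.psi (C ∩ D i) = C ∩ D i := by
            rw [← psi_inter hV hdisj hbi, hpsi]
          by_cases h0 : C ∩ D i = ∅
          · rw [h0, Phi_empty, partn_empty]
          · have hgi : ¬ (G.psi (C ∩ D i)).ncard < (C ∩ D i).ncard := by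
              rw [hpsii]; exact lt_irrefl _
            rw [CADMG.partn, if_neg h0, dif_neg hgi]

lemma finprod_partn
    (hV : G.V = ⋃ i, D i) (hdisj : Pairwise (Function.onFun Disjoint D))
    (hbi : ∀ e ∈ G.bi, ∀ i j : Fin l, i ≠ j → ¬ (e.1 ∈ D i ∧ e.2 ∈ D j))
    (q : Set α → (α → Bool) → ℝ) (x : α → Bool) (C : Set α) :
    ∏ᶠ H ∈ G.partn C, q H x = ∏ i, ∏ᶠ H ∈ G.partn (C ∩ D i), q H x := by
  have pd : Pairwise (Function.onFun Disjoint (fun i => G.partn (C ∩ D i))) := by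
    intro i j hij
    rw [Function.onFun, Set.disjoint_left]
    intro H hHi hHj
    obtain ⟨hh, hsubi⟩ := partn_mem G _ _ le_rfl H hHi
    obtain ⟨-, hsubj⟩ := partn_mem G _ _ le_rfl H hHj
    obtain ⟨v, hv⟩ := G.head_nonempty hh
    exact Set.disjoint_left.mp (hdisj hij) (hsubi hv).2 (hsubj hv).2
  rw [partn_split hV hdisj hbi C.ncard C le_rfl,
    finprod_mem_iUnion pd (fun i => Set.toFinite _), finprod_eq_prod_of_fintype]

lemma neg_one_pow_ncard (B : Set α) : ((-1 : ℝ)) ^ B.ncard = ∏ᶠ v ∈ B, (-1 : ℝ) := by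
  rw [finprod_mem_eq_finite_toFinset_prod _ (Set.toFinite B), Finset.prod_const,
    Set.ncard_eq_toFinset_card B (Set.toFinite B)]

lemma sign_split
    (hV : G.V = ⋃ i, D i) (hdisj : Pairwise (Function.onFun Disjoint D))
    {A : Set α} (hA : A ⊆ G.V) :
    ((-1 : ℝ)) ^ A.ncard = ∏ i, ((-1 : ℝ)) ^ (A ∩ D i).ncard := by
  have pd : Pairwise (Function.onFun Disjoint (fun i => A ∩ D i)) := fun i j hij =>
    (hdisj hij).mono Set.inter_subset_right Set.inter_subset_right
  have hAeq : A = ⋃ i, A ∩ D i := by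
    rw [← Set.inter_iUnion, ← hV]
    exact (Set.inter_eq_left.mpr hA).symm
  rw [neg_one_pow_ncard]
  conv_lhs => rw [hAeq]
  rw [finprod_mem_iUnion pd (fun i => Set.toFinite _), finprod_eq_prod_of_fintype]
  exact Finset.prod_congr rfl fun i _ => (neg_one_pow_ncard _).symm

end AuxLemmas

/-- **Lemma 8 (the alternating sum factorizes over districts).**  Let `G` be a
CADMG with binary state spaces whose random vertex set is the disjoint union
`V = D 1 ∪̇ ⋯ ∪̇ D l` of sets with no bidirected edge of `G` between distinct
pieces.  Then for any parameters `q_H(x_T)` (functions of the tail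
coordinates only), any assignment `x`, `O = {v ∈ V : x v = 0}` and
`O_i = O ∩ D i`:
`Σ_{O ⊆ C ⊆ V} (−1)^{|C\O|} ∏_{H ∈ ⟨C⟩_G} q_H(x_T)
  = ∏_i Σ_{O_i ⊆ C ⊆ D i} (−1)^{|C\O_i|} ∏_{H ∈ ⟨C⟩_G} q_H(x_T)`. -/
theorem altSum_prod_of_disconnected {α : Type} [Fintype α] (G : CADMG α)
    (l : ℕ) (D : Fin l → Set α)
    (hV : G.V = ⋃ i, D i) (hdisj : Pairwise (Function.onFun Disjoint D))
    (hbi : ∀ e ∈ G.bi, ∀ i j : Fin l, i ≠ j → ¬ (e.1 ∈ D i ∧ e.2 ∈ D j))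
    (q : Set α → (α → Bool) → ℝ)
    (hq : ∀ H ∈ G.heads, ∀ x y : α → Bool,
        (∀ v ∈ G.tail H, x v = y v) → q H x = q H y)
    (x : α → Bool) :
    G.altSum q x {v | v ∈ G.V ∧ x v = false} G.V =
      ∏ i : Fin l,
        G.altSum q x ({v | v ∈ G.V ∧ x v = false} ∩ D i) (D i) := by
  classical
  set O : Set α := {v | v ∈ G.V ∧ x v = false} with hOdef
  have hOV : O ⊆ G.V := fun v hv => hv.1
  have key : ∀ (O' U : Set α), G.altSum q x O' U =
      ∑ C ∈ (Set.toFinite {C : Set α | O' ⊆ C ∧ C ⊆ U}).toFinset,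
        ((-1 : ℝ)) ^ (C \ O').ncard * ∏ᶠ H ∈ G.partn C, q H x := by
    intro O' U
    rw [CADMG.altSum, finsum_mem_eq_finite_toFinset_sum]
  rw [key O G.V, Finset.prod_congr rfl (fun i _ => key (O ∩ D i) (D i)),
    Finset.prod_univ_sum]
  refine Finset.sum_nbij' (fun C => fun k => C ∩ D k) (fun c => ⋃ k, c k) ?_ ?_ ?_ ?_ ?_
  · intro C hC
    rw [Set.Finite.mem_toFinset] at hC
    rw [Fintype.mem_piFinset]
    intro k
    rw [Set.Finite.mem_toFinset]
    exact ⟨Set.inter_subset_inter_left _ hC.1, Set.inter_subset_right⟩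
  · intro c hc
    rw [Fintype.mem_piFinset] at hc
    rw [Set.Finite.mem_toFinset]
    constructor
    · intro v hv
      have hvV : v ∈ G.V := hOV hv
      rw [hV] at hvV
      obtain ⟨k, hk⟩ := Set.mem_iUnion.mp hvV
      have hck := (Set.Finite.mem_toFinset _).mp (hc k)
      exact Set.mem_iUnion.mpr ⟨k, hck.1 ⟨hv, hk⟩⟩
    · rw [hV]
      exact Set.iUnion_mono fun k => ((Set.Finite.mem_toFinset _).mp (hc k)).2
  · intro C hC
    rw [Set.Finite.mem_toFinset] at hC
    show (⋃ k, C ∩ D k) = C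
    rw [← Set.inter_iUnion, ← hV]
    exact Set.inter_eq_left.mpr hC.2
  · intro c hc
    rw [Fintype.mem_piFinset] at hc
    beta_reduce
    funext k
    have hsub : ∀ m, c m ⊆ D m := fun m => ((Set.Finite.mem_toFinset _).mp (hc m)).2
    ext v
    constructor
    · rintro ⟨hvU, hvk⟩
      obtain ⟨m, hm⟩ := Set.mem_iUnion.mp hvU
      by_cases hmk : m = k
      · subst hmk; exact hm
      · exact absurd hvk (Set.disjoint_left.mp (hdisj hmk) (hsub m hm))
    · intro hv
      exact ⟨Set.mem_iUnion.mpr ⟨k, hv⟩, hsub k hv⟩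
  · intro C hC
    rw [Set.Finite.mem_toFinset] at hC
    have hCV : C ⊆ G.V := hC.2
    beta_reduce
    rw [sign_split hV hdisj (Set.diff_subset.trans hCV),
      finprod_partn hV hdisj hbi q x C, ← Finset.prod_mul_distrib]
    refine Finset.prod_congr rfl fun i _ => ?_
    have hset : (C \ O) ∩ D i = (C ∩ D i) \ (O ∩ D i) := by
      ext v
      simp only [Set.mem_inter_iff, Set.mem_diff]
      tauto
    rw [hset]
end
end
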